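/- Let G : (0,1) → ℝ be defined by G(λ) = N^{-1}·∫₀^λ s^{2/3}(1−s)^{-1/3}(2−s)^{-2} ds, where N = ∫₀^1 s^{2/3}(1−s)^{-1/3}(2−s)^{-2} ds. Define u(a₁, a₂, b₁) = G((a₁ − a₂)/(b₁ − a₂)) on the open set of triples of distinct reals with a₂ < a₁ < b₁. Then u satisfies the second-order PDE (3/2)·∂²_{a₁}u + D·∂_{a₁}u + (2/(a₂ − a₁))·∂_{a₂}u + (2/(b₁ − a₁))·∂_{b₁}u = 0, where D = −3·∂_{a₁} log R with R(a₁, a₂, b₁) = √(b₁ − a₁)·(a₁ − a₂)/(a₁ + a₂ − 2b₁). -/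

import Mathlib

open Real intervalIntegral

/-- The crossing-probability function `G` for `+/−/+/free` boundary conditions. -/
noncomputable def crossG (lam : ℝ) : ℝ :=
  (∫ s in (0:ℝ)..1, s ^ ((2 : ℝ) / 3) * (1 - s) ^ (-(1 : ℝ) / 3) * (2 - s) ^ (-(2 : ℝ)))⁻¹
    * ∫ s in (0:ℝ)..lam, s ^ ((2 : ℝ) / 3) * (1 - s) ^ (-(1 : ℝ) / 3) * (2 - s) ^ (-(2 : ℝ))

/-- `u(a₁,a₂,b₁) = G((a₁−a₂)/(b₁−a₂))`. -/
noncomputable def crossU (a₁ a₂ b₁ : ℝ) : ℝ := crossG ((a₁ - a₂) / (b₁ - a₂))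

/-- The drift `D = −3 ∂_{a₁} log R` with `R = √(b₁−a₁)·(a₁−a₂)/(a₁+a₂−2b₁)`. -/
noncomputable def driftD (a₁ a₂ b₁ : ℝ) : ℝ :=
  -3 * deriv (fun a : ℝ =>
    Real.log (Real.sqrt (b₁ - a) * (a - a₂) / (a + a₂ - 2 * b₁))) a₁

/-- Auxiliary: the integrand of `crossG`. -/
noncomputable def cfI (s : ℝ) : ℝ :=
  s ^ ((2 : ℝ) / 3) * (1 - s) ^ (-(1 : ℝ) / 3) * (2 - s) ^ (-(2 : ℝ))

lemma cfI_continuousAt {x : ℝ} (hx : x < 1) : ContinuousAt cfI x := by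
  have h1 : ContinuousAt (fun s : ℝ => s ^ ((2 : ℝ) / 3)) x :=
    Real.continuousAt_rpow_const x _ (Or.inr (by norm_num))
  have h2 : ContinuousAt (fun s : ℝ => (1 - s) ^ (-(1 : ℝ) / 3)) x :=
    (Real.continuousAt_rpow_const (1 - x) _ (Or.inl (by intro h; nlinarith))).comp
      ((continuous_const.sub continuous_id).continuousAt)
  have h3 : ContinuousAt (fun s : ℝ => (2 - s) ^ (-(2 : ℝ))) x :=
    (Real.continuousAt_rpow_const (2 - x) _ (Or.inl (by intro h; nlinarith))).comp
      ((continuous_const.sub continuous_id).continuousAt)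
  exact (h1.mul h2).mul h3

lemma crossG_hasDerivAt {x : ℝ} (hx : x ∈ Set.Ioo (0:ℝ) 1) :
    HasDerivAt crossG ((∫ s in (0:ℝ)..1, cfI s)⁻¹ * cfI x) x := by
  have hint : IntervalIntegrable cfI MeasureTheory.volume 0 x := by
    apply ContinuousOn.intervalIntegrable
    intro s hs
    have hs1 : s < 1 := by
      have h' : s ≤ max 0 x := hs.2
      rcases le_max_iff.mp h' with h | h
      · linarith
      · exact lt_of_le_of_lt h hx.2
    exact (cfI_continuousAt hs1).continuousWithinAt
  have hmeas : StronglyMeasurableAtFilter cfI (nhds x) :=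
    ⟨Set.Iio 1, Iio_mem_nhds hx.2,
      (continuousOn_of_forall_continuousAt (fun y hy => cfI_continuousAt hy)).aestronglyMeasurable
        measurableSet_Iio⟩
  have hF : HasDerivAt (fun y => ∫ s in (0:ℝ)..y, cfI s) (cfI x) x :=
    intervalIntegral.integral_hasDerivAt_right hint hmeas (cfI_continuousAt hx.2)
  exact hF.const_mul (∫ s in (0:ℝ)..1, cfI s)⁻¹

lemma cfI_hasDerivAt {x : ℝ} (hx : x ∈ Set.Ioo (0:ℝ) 1) :
    HasDerivAt cfI
      (cfI x * ((2/3) / x + (1/3) / (1 - x) + 2 / (2 - x))) x := by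
  obtain ⟨hx0, hx1⟩ := hx
  have h1x : (0:ℝ) < 1 - x := by linarith
  have h2x : (0:ℝ) < 2 - x := by linarith
  have h1 : HasDerivAt (fun s : ℝ => s ^ ((2 : ℝ) / 3))
      (1 * ((2:ℝ)/3) * x ^ ((2 : ℝ)/3 - 1)) x :=
    (hasDerivAt_id x).rpow_const (Or.inl hx0.ne')
  have h2 : HasDerivAt (fun s : ℝ => (1 - s) ^ (-(1 : ℝ) / 3))
      ((-1) * (-(1:ℝ)/3) * (1 - x) ^ (-(1 : ℝ)/3 - 1)) x :=
    ((hasDerivAt_id x).const_sub 1).rpow_const (Or.inl h1x.ne')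
  have h3 : HasDerivAt (fun s : ℝ => (2 - s) ^ (-(2 : ℝ)))
      ((-1) * (-(2:ℝ)) * (2 - x) ^ (-(2 : ℝ) - 1)) x :=
    ((hasDerivAt_id x).const_sub 2).rpow_const (Or.inl h2x.ne')
  have h := (h1.mul h2).mul h3
  refine HasDerivAt.congr_deriv (f := cfI) h ?_
  rw [Real.rpow_sub hx0, Real.rpow_sub h1x, Real.rpow_sub h2x, Real.rpow_one,
    Real.rpow_one, Real.rpow_one]
  unfold cfI
  simp only [Pi.mul_apply]
  field_simp

lemma drift_alg (t p m : ℝ) (ht : t ≠ 0) (hp : p ≠ 0) (hm : m ≠ 0) :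
    -3 * ((t * p / m)⁻¹ * ((1 / (2 * t) * (-1) * p + t * 1) * m - t * p * 1) / m ^ 2)
      = 3 / (2 * t ^ 2) - 3 / p + 3 / m := by
  field_simp
  ring

set_option maxHeartbeats 2000000 in
theorem crossing_probability_pde (a₁ a₂ b₁ : ℝ) (h₁ : a₂ < a₁) (h₂ : a₁ < b₁) :
    (3 / 2) * deriv (fun a : ℝ => deriv (fun a' : ℝ => crossU a' a₂ b₁) a) a₁
      + driftD a₁ a₂ b₁ * deriv (fun a : ℝ => crossU a a₂ b₁) a₁
      + (2 / (a₂ - a₁)) * deriv (fun x : ℝ => crossU a₁ x b₁) a₂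
      + (2 / (b₁ - a₁)) * deriv (fun y : ℝ => crossU a₁ a₂ y) b₁ = 0 := by
  have hp : (0:ℝ) < a₁ - a₂ := by linarith
  have hq : (0:ℝ) < b₁ - a₁ := by linarith
  have hΔ : (0:ℝ) < b₁ - a₂ := by linarith
  have hm : a₁ + a₂ - 2 * b₁ < 0 := by linarith
  set c : ℝ := (∫ s in (0:ℝ)..1, cfI s)⁻¹ with hc
  set lam : ℝ := (a₁ - a₂) / (b₁ - a₂) with hlam
  have hlam01 : lam ∈ Set.Ioo (0:ℝ) 1 := by
    constructor
    · exact div_pos hp hΔ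
    · rw [hlam, div_lt_one hΔ]; linarith
  have key : ∀ a ∈ Set.Ioo a₂ b₁,
      HasDerivAt (fun a' : ℝ => crossU a' a₂ b₁)
        (c * cfI ((a - a₂) / (b₁ - a₂)) * (1 / (b₁ - a₂))) a := by
    intro a ha
    have hmem : (a - a₂) / (b₁ - a₂) ∈ Set.Ioo (0:ℝ) 1 := by
      constructor
      · exact div_pos (by linarith [ha.1]) hΔ
      · rw [div_lt_one hΔ]; linarith [ha.2]
    have hinner : HasDerivAt (fun a' : ℝ => (a' - a₂) / (b₁ - a₂)) (1 / (b₁ - a₂)) a := by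
      simpa [one_div] using ((hasDerivAt_id a).sub_const a₂).div_const (b₁ - a₂)
    have h := (crossG_hasDerivAt hmem).comp a hinner
    simpa [crossU, Function.comp_def, mul_assoc, hc] using h
  have ha₁mem : a₁ ∈ Set.Ioo a₂ b₁ := ⟨h₁, h₂⟩
  have hd1 : deriv (fun a : ℝ => crossU a a₂ b₁) a₁ = c * cfI lam * (1 / (b₁ - a₂)) :=
    (key a₁ ha₁mem).deriv
  have hEv : deriv (fun a' : ℝ => crossU a' a₂ b₁)
      =ᶠ[nhds a₁] fun a => c * cfI ((a - a₂) / (b₁ - a₂)) * (1 / (b₁ - a₂)) := by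
    filter_upwards [Ioo_mem_nhds h₁ h₂] with a ha using (key a ha).deriv
  have hinner₁ : HasDerivAt (fun a' : ℝ => (a' - a₂) / (b₁ - a₂)) (1 / (b₁ - a₂)) a₁ := by
    simpa [one_div] using ((hasDerivAt_id a₁).sub_const a₂).div_const (b₁ - a₂)
  have hd2 : deriv (fun a : ℝ => deriv (fun a' : ℝ => crossU a' a₂ b₁) a) a₁
      = c * ((cfI lam * ((2/3) / lam + (1/3) / (1 - lam) + 2 / (2 - lam))) * (1 / (b₁ - a₂)))
          * (1 / (b₁ - a₂)) := by
    rw [hEv.deriv_eq]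
    have h := (((cfI_hasDerivAt hlam01).comp a₁ hinner₁).const_mul c).mul_const (1 / (b₁ - a₂))
    exact h.deriv
  have hd3 : deriv (fun x : ℝ => crossU a₁ x b₁) a₂
      = c * cfI lam * (((-1) * (b₁ - a₂) - (a₁ - a₂) * (-1)) / (b₁ - a₂) ^ 2) := by
    have hu : HasDerivAt (fun x : ℝ => a₁ - x) (-1 : ℝ) a₂ := by
      simpa using (hasDerivAt_id a₂).const_sub a₁
    have hv : HasDerivAt (fun x : ℝ => b₁ - x) (-1 : ℝ) a₂ := by
      simpa using (hasDerivAt_id a₂).const_sub b₁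
    have hj : HasDerivAt (fun x : ℝ => (a₁ - x) / (b₁ - x))
        (((-1) * (b₁ - a₂) - (a₁ - a₂) * (-1)) / (b₁ - a₂) ^ 2) a₂ := hu.div hv hΔ.ne'
    have h := (crossG_hasDerivAt hlam01).comp a₂ hj
    have h' : HasDerivAt (fun x : ℝ => crossU a₁ x b₁)
        (c * cfI lam * (((-1) * (b₁ - a₂) - (a₁ - a₂) * (-1)) / (b₁ - a₂) ^ 2)) a₂ := by
      simpa [crossU, Function.comp_def, mul_assoc, hc] using h
    exact h'.deriv
  have hd4 : deriv (fun y : ℝ => crossU a₁ a₂ y) b₁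
      = c * cfI lam * ((0 * (b₁ - a₂) - (a₁ - a₂) * 1) / (b₁ - a₂) ^ 2) := by
    have hu : HasDerivAt (fun _ : ℝ => a₁ - a₂) (0 : ℝ) b₁ := hasDerivAt_const _ _
    have hv : HasDerivAt (fun y : ℝ => y - a₂) (1 : ℝ) b₁ := by
      simpa using (hasDerivAt_id b₁).sub_const a₂
    have hj : HasDerivAt (fun y : ℝ => (a₁ - a₂) / (y - a₂))
        ((0 * (b₁ - a₂) - (a₁ - a₂) * 1) / (b₁ - a₂) ^ 2) b₁ := hu.div hv hΔ.ne'
    have h := (crossG_hasDerivAt hlam01).comp b₁ hj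
    have h' : HasDerivAt (fun y : ℝ => crossU a₁ a₂ y)
        (c * cfI lam * ((0 * (b₁ - a₂) - (a₁ - a₂) * 1) / (b₁ - a₂) ^ 2)) b₁ := by
      simpa [crossU, Function.comp_def, mul_assoc, hc] using h
    exact h'.deriv
  have hD : driftD a₁ a₂ b₁
      = 3 / (2 * (b₁ - a₁)) - 3 / (a₁ - a₂) + 3 / (a₁ + a₂ - 2 * b₁) := by
    have ht0 : (0:ℝ) < Real.sqrt (b₁ - a₁) := Real.sqrt_pos.mpr hq
    have hbsub : HasDerivAt (fun a : ℝ => b₁ - a) (-1 : ℝ) a₁ := by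
      simpa using (hasDerivAt_id a₁).const_sub b₁
    have hs : HasDerivAt (fun a : ℝ => Real.sqrt (b₁ - a))
        (1 / (2 * Real.sqrt (b₁ - a₁)) * (-1)) a₁ := by
      have h := (Real.hasDerivAt_sqrt hq.ne').comp a₁ hbsub
      simpa [Function.comp_def] using h
    have hp' : HasDerivAt (fun a : ℝ => a - a₂) (1 : ℝ) a₁ := by
      simpa using (hasDerivAt_id a₁).sub_const a₂
    have hm' : HasDerivAt (fun a : ℝ => a + a₂ - 2 * b₁) (1 : ℝ) a₁ := by
      simpa using ((hasDerivAt_id a₁).add_const a₂).sub_const (2 * b₁)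
    have hg := (hs.mul hp').div hm' hm.ne
    have hgx : Real.sqrt (b₁ - a₁) * (a₁ - a₂) / (a₁ + a₂ - 2 * b₁) ≠ 0 :=
      div_ne_zero (mul_ne_zero ht0.ne' hp.ne') hm.ne
    have hlog := (Real.hasDerivAt_log hgx).comp a₁ hg
    have hlog' : HasDerivAt
        (fun a : ℝ => Real.log (Real.sqrt (b₁ - a) * (a - a₂) / (a + a₂ - 2 * b₁)))
        ((Real.sqrt (b₁ - a₁) * (a₁ - a₂) / (a₁ + a₂ - 2 * b₁))⁻¹ *
          (((1 / (2 * Real.sqrt (b₁ - a₁)) * (-1)) * (a₁ - a₂)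
              + Real.sqrt (b₁ - a₁) * 1) * (a₁ + a₂ - 2 * b₁)
            - Real.sqrt (b₁ - a₁) * (a₁ - a₂) * 1) / (a₁ + a₂ - 2 * b₁) ^ 2) a₁ := by
      simpa [Function.comp_def, mul_div_assoc] using hlog
    rw [driftD, hlog'.deriv]
    set t : ℝ := Real.sqrt (b₁ - a₁) with htdef
    have ht2 : b₁ - a₁ = t ^ 2 := (Real.sq_sqrt hq.le).symm
    rw [ht2]
    have htne : t ≠ 0 := ht0.ne'
    exact drift_alg t (a₁ - a₂) (a₁ + a₂ - 2 * b₁) htne hp.ne' hm.ne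
  have hlamne : lam ≠ 0 := ne_of_gt hlam01.1
  have h1lamne : (1:ℝ) - lam ≠ 0 := by have := hlam01.2; intro h; nlinarith
  have h2b : 2 * b₁ - a₁ - a₂ ≠ 0 := by intro h; nlinarith
  have h2lamne : (2:ℝ) - lam ≠ 0 := by
    have : lam < 2 := lt_trans hlam01.2 one_lt_two
    intro h; nlinarith
  have hμ : 2/3/lam + 1/3/(1-lam) + 2/(2-lam)
      = (2*(b₁-a₂))/(3*(a₁-a₂)) + (b₁-a₂)/(3*(b₁-a₁)) + (2*(b₁-a₂))/(2*b₁-a₁-a₂) := by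
    have e1 : (1:ℝ) - lam = (b₁-a₁)/(b₁-a₂) := by
      rw [hlam]; field_simp; ring
    have e2 : (2:ℝ) - lam = (2*b₁-a₁-a₂)/(b₁-a₂) := by
      rw [hlam]; field_simp; try ring
    rw [e1, e2, hlam]
    rw [div_div_eq_mul_div, div_div_eq_mul_div, div_div_eq_mul_div]
    field_simp
    try ring
  rw [hd1, hd3, hd4, hD]
  have hd2' : deriv (fun a : ℝ => deriv (fun a' : ℝ => crossU a' a₂ b₁) a) a₁
      = c * cfI lam * ((2/3/lam + 1/3/(1-lam) + 2/(2-lam)) * (1/(b₁-a₂)) * (1/(b₁-a₂))) := by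
    rw [hd2]; ring
  rw [hd2']
  have hbr : (3/2 : ℝ) * ((2/3/lam + 1/3/(1-lam) + 2/(2-lam)) * (1/(b₁-a₂)) * (1/(b₁-a₂)))
      + (3/(2*(b₁-a₁)) - 3/(a₁-a₂) + 3/(a₁+a₂-2*b₁)) * (1/(b₁-a₂))
      + (2/(a₂-a₁)) * (((-1)*(b₁-a₂) - (a₁-a₂)*(-1))/(b₁-a₂)^2)
      + (2/(b₁-a₁)) * ((0*(b₁-a₂) - (a₁-a₂)*1)/(b₁-a₂)^2) = 0 := by
    rw [hμ, show a₁+a₂-2*b₁ = -(2*b₁-a₁-a₂) by ring,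
      show a₂-a₁ = -(a₁-a₂) by ring, div_neg, div_neg]
    field_simp
    try ring
  linear_combination (c * cfI lam) * hbr
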